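/- Let Q ∈ ℝ^{T×n}, S ∈ ℝ^{n×n} with S invertible, U ∈ ℝ^{m×T}, X₀ ∈ ℝ^{n×T}, X₁ ∈ ℝ^{n×T}, A ∈ ℝ^{n×n}, B ∈ ℝ^{n×m} with X₁ = A X₀ + B U. If X₀ Q = S and K := U Q S⁻¹, then A + B K = X₁ Q S⁻¹. -/
import Mathlib

open Matrix

/-- Key step of the data-driven SDP reformulation: if `X₁ = A X₀ + B U`,
`X₀ Q = S` with `S` invertible and `K = U Q S⁻¹`, then `A + B K = X₁ Q S⁻¹`. -/
theorem data_driven_sdp_closed_loop (n m T : ℕ)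
    (Q : Matrix (Fin T) (Fin n) ℝ)
    (S : Matrix (Fin n) (Fin n) ℝ) (hS : IsUnit S.det)
    (U : Matrix (Fin m) (Fin T) ℝ) (X₀ X₁ : Matrix (Fin n) (Fin T) ℝ)
    (A : Matrix (Fin n) (Fin n) ℝ) (B : Matrix (Fin n) (Fin m) ℝ)
    (hdata : X₁ = A * X₀ + B * U)
    (hXQ : X₀ * Q = S)
    (K : Matrix (Fin m) (Fin n) ℝ) (hK : K = U * Q * S⁻¹) :
    A + B * K = X₁ * Q * S⁻¹ := by
  subst hdata hK
  have h : S * S⁻¹ = 1 := mul_nonsing_inv S hS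
  calc A + B * (U * Q * S⁻¹)
      = A * (S * S⁻¹) + B * (U * Q * S⁻¹) := by rw [h, Matrix.mul_one]
    _ = (A * X₀ + B * U) * Q * S⁻¹ := by rw [← hXQ, Matrix.add_mul, Matrix.add_mul, Matrix.mul_assoc, Matrix.mul_assoc A, Matrix.mul_assoc B, Matrix.mul_assoc B, Matrix.mul_assoc U, ← Matrix.mul_assoc X₀ Q, Matrix.mul_assoc A]
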